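/- Suppose 0 < a < 1, −1 < b < 0 and −1 < c ≤ 0. Then for every n ∈ ℕ, Σ_{i=0}^n (−n)_i² (c)_i / (i! (−n−a)_i (−n−b)_i) ≤ (1+a+b+c)_n / (1+a+b)_n ≤ Σ_{i=0}^n (−n)_i (−n−1)_i (c)_i / (i! (−n−a)_i (−n−b−1)_i). -/

import Mathlib

/-- Ascending Pochhammer symbol `(x)_m = ∏_{i=0}^{m-1} (x+i)`. -/
noncomputable def poch (x : ℝ) (m : ℕ) : ℝ := ∏ i ∈ Finset.range m, (x + i)

lemma poch_succ (x : ℝ) (m : ℕ) : poch x (m + 1) = poch x m * (x + m) := by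
  simp [poch, Finset.prod_range_succ]

lemma poch_succ' (x : ℝ) (m : ℕ) : poch x (m + 1) = x * poch (x + 1) m := by
  rw [poch, Finset.prod_range_succ', poch]
  rw [Finset.prod_congr rfl (fun i _ => by push_cast; ring :
    ∀ i ∈ Finset.range m, (x + ((i + 1 : ℕ) : ℝ)) = ((x + 1) + (i : ℝ)))]
  push_cast; ring

lemma poch_add (x : ℝ) (m k : ℕ) : poch x (m + k) = poch x m * poch (x + m) k := by
  rw [poch, Finset.prod_range_add, poch, poch]
  congr 1
  refine Finset.prod_congr rfl fun i _ => ?_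
  push_cast; ring

lemma poch_neg_sign (x : ℝ) (m : ℕ) (h : ∀ j : ℕ, j < m → x + j < 0) :
    0 < (-1) ^ m * poch x m := by
  induction m with
  | zero => simp [poch]
  | succ m ih =>
    rw [poch_succ]
    have h1 : 0 < (-1 : ℝ) ^ m * poch x m := ih (fun j hj => h j (by omega))
    have h2 : x + m < 0 := h m (by omega)
    have e : (-1 : ℝ) ^ (m + 1) * (poch x m * (x + m))
        = ((-1) ^ m * poch x m) * (-(x + m)) := by ring
    rw [e]
    exact mul_pos h1 (by linarith)

lemma poch_pos (x : ℝ) (m : ℕ) (h : 0 < x) : 0 < poch x m := by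
  refine Finset.prod_pos fun i _ => ?_
  have : (0 : ℝ) ≤ i := Nat.cast_nonneg i
  linarith

lemma poch_c_nonpos (c : ℝ) (hc0 : -1 < c) (hc1 : c ≤ 0) (m : ℕ) (hm : 1 ≤ m) :
    poch c m ≤ 0 := by
  obtain ⟨k, rfl⟩ : ∃ k, m = k + 1 := ⟨m - 1, by omega⟩
  rw [poch_succ']
  have h : 0 < poch (c + 1) k := poch_pos _ _ (by linarith)
  nlinarith

lemma poch_eq_neg_prod (x : ℝ) (m : ℕ) :
    poch x m = (-1) ^ m * ∏ j ∈ Finset.range m, (-(x + j)) := by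
  induction m with
  | zero => simp [poch]
  | succ m ih =>
    rw [poch_succ, ih, Finset.prod_range_succ]
    ring

lemma vdm : ∀ (n : ℕ) (c d : ℝ),
    ∑ i ∈ Finset.range (n + 1),
      (-1 : ℝ) ^ i * (n.choose i) * poch c i * poch (d + i) (n - i) = poch (d - c) n := by
  intro n
  induction n with
  | zero => intro c d; simp [poch]
  | succ n ih =>
    intro c d
    rw [Finset.sum_range_succ']
    have hsplit : ∀ i ∈ Finset.range (n + 1),
        (-1 : ℝ) ^ (i + 1) * (((n + 1).choose (i + 1) : ℕ) : ℝ) * poch c (i + 1) *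
            poch (d + ((i + 1 : ℕ) : ℝ)) (n + 1 - (i + 1))
          = (-c) * ((-1 : ℝ) ^ i * ((n.choose i : ℕ) : ℝ) * poch (c + 1) i *
                poch ((d + 1) + (i : ℝ)) (n - i))
            + ((-1 : ℝ) ^ (i + 1) * ((n.choose (i + 1) : ℕ) : ℝ) * poch c (i + 1) *
                poch (d + ((i + 1 : ℕ) : ℝ)) (n + 1 - (i + 1))) := by
      intro i hi
      have hch : (((n + 1).choose (i + 1) : ℕ) : ℝ)
          = ((n.choose i : ℕ) : ℝ) + ((n.choose (i + 1) : ℕ) : ℝ) := by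
        rw [Nat.choose_succ_succ]; push_cast; ring
      have hsub : n + 1 - (i + 1) = n - i := by omega
      have harg : d + ((i + 1 : ℕ) : ℝ) = (d + 1) + (i : ℝ) := by push_cast; ring
      rw [hch, hsub, harg, poch_succ' c i]
      ring
    rw [Finset.sum_congr rfl hsplit, Finset.sum_add_distrib, ← Finset.mul_sum, ih (c + 1) (d + 1)]
    have e1 : (d + 1) - (c + 1) = d - c := by ring
    rw [e1]
    have g0 : (-1 : ℝ) ^ 0 * (((n + 1).choose 0 : ℕ) : ℝ) * poch c 0 *
        poch (d + ((0 : ℕ) : ℝ)) (n + 1 - 0)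
        = poch d (n + 1) := by simp [poch]
    have hsec : (∑ i ∈ Finset.range (n + 1),
          (-1 : ℝ) ^ (i + 1) * ((n.choose (i + 1) : ℕ) : ℝ) * poch c (i + 1) *
            poch (d + ((i + 1 : ℕ) : ℝ)) (n + 1 - (i + 1)))
          + poch d (n + 1)
        = (d + n) * poch (d - c) n := by
      have := Finset.sum_range_succ'
        (fun j => (-1 : ℝ) ^ j * ((n.choose j : ℕ) : ℝ) * poch c j *
          poch (d + (j : ℝ)) (n + 1 - j)) (n + 1)
      simp only [Nat.cast_zero, add_zero, Nat.choose_zero_right, Nat.cast_one, pow_zero,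
        Nat.sub_zero] at this
      have f0 : (1 : ℝ) * 1 * poch c 0 * poch d (n + 1) = poch d (n + 1) := by simp [poch]
      rw [← f0, ← this]
      rw [Finset.sum_range_succ]
      have htop : (-1 : ℝ) ^ (n + 1) * ((n.choose (n + 1) : ℕ) : ℝ) * poch c (n + 1) *
          poch (d + ((n + 1 : ℕ) : ℝ)) (n + 1 - (n + 1)) = 0 := by
        simp [Nat.choose_succ_self]
      rw [htop, add_zero]
      have hterm : ∀ j ∈ Finset.range (n + 1),
          (-1 : ℝ) ^ j * ((n.choose j : ℕ) : ℝ) * poch c j * poch (d + (j : ℝ)) (n + 1 - j)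
          = ((-1 : ℝ) ^ j * ((n.choose j : ℕ) : ℝ) * poch c j * poch (d + (j : ℝ)) (n - j))
            * (d + n) := by
        intro j hj
        have hj' : j ≤ n := by
          have := Finset.mem_range.mp hj; omega
        have h1 : n + 1 - j = (n - j) + 1 := by omega
        rw [h1, poch_succ]
        have h2 : d + (j : ℝ) + ((n - j : ℕ) : ℝ) = d + n := by
          rw [Nat.cast_sub hj']; ring
        rw [h2]
        ring
      rw [Finset.sum_congr rfl hterm, ← Finset.sum_mul, ih c d]
      ring
    rw [g0, add_assoc, hsec, poch_succ (d - c) n]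
    ring

lemma poch_neg_nat (n : ℕ) : ∀ i, i ≤ n →
    poch (-(n : ℝ)) i = (-1) ^ i * (i.factorial : ℝ) * (n.choose i : ℝ) := by
  intro i
  induction i with
  | zero => intro _; simp [poch]
  | succ i ih =>
    intro hi
    have hi' : i ≤ n := by omega
    rw [poch_succ, ih hi', Nat.factorial_succ]
    have key : ((i : ℝ) + 1) * (n.choose (i + 1) : ℝ) = (n.choose i : ℝ) * ((n : ℝ) - i) := by
      have h2 := Nat.choose_succ_right_eq n i
      have h3 := congrArg (fun t : ℕ => (t : ℝ)) h2
      push_cast at h3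
      rw [Nat.cast_sub hi'] at h3
      linarith [h3]
    push_cast
    linear_combination ((-1 : ℝ) ^ i * (i.factorial : ℝ)) * key

lemma poch_reflect (s : ℝ) (n : ℕ) : poch (-(n : ℝ) - s) n = (-1) ^ n * poch (1 + s) n := by
  induction n with
  | zero => simp [poch]
  | succ n ih =>
    rw [poch_succ' (-((n + 1 : ℕ) : ℝ) - s) n]
    have e : -((n + 1 : ℕ) : ℝ) - s + 1 = -(n : ℝ) - s := by push_cast; ring
    rw [e, ih, poch_succ (1 + s) n]
    push_cast; ring

lemma mid_eq (a b c : ℝ) (hab : -1 < a + b) (n : ℕ) :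
    poch (1 + a + b + c) n / poch (1 + a + b) n
      = ∑ i ∈ Finset.range (n + 1),
          poch (-(n : ℝ)) i * poch c i / ((i.factorial : ℝ) * poch (-(n : ℝ) - a - b) i) := by
  have hdneg : ∀ j : ℕ, j < n → (-(n : ℝ) - a - b) + j < 0 := by
    intro j hj
    have h1 : (j : ℝ) + 1 ≤ (n : ℝ) := by exact_mod_cast hj
    linarith
  have hne : ∀ i, i ≤ n → poch (-(n : ℝ) - a - b) i ≠ 0 := by
    intro i hi
    have hs := poch_neg_sign (-(n : ℝ) - a - b) i (fun j hj => hdneg j (by omega))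
    intro h0
    rw [h0, mul_zero] at hs
    exact lt_irrefl _ hs
  have hdn : poch (-(n : ℝ) - a - b) n ≠ 0 := hne n le_rfl
  have term_eq : ∀ i ∈ Finset.range (n + 1),
      poch (-(n : ℝ)) i * poch c i / ((i.factorial : ℝ) * poch (-(n : ℝ) - a - b) i)
      = ((-1 : ℝ) ^ i * (n.choose i : ℝ) * poch c i *
          poch ((-(n : ℝ) - a - b) + i) (n - i)) / poch (-(n : ℝ) - a - b) n := by
    intro i hi
    have hi' : i ≤ n := by
      have := Finset.mem_range.mp hi; omega
    have hsplit : poch (-(n : ℝ) - a - b) n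
        = poch (-(n : ℝ) - a - b) i * poch ((-(n : ℝ) - a - b) + i) (n - i) := by
      have h1 : poch (-(n : ℝ) - a - b) (i + (n - i))
          = poch (-(n : ℝ) - a - b) i * poch ((-(n : ℝ) - a - b) + i) (n - i) :=
        poch_add _ i (n - i)
      rwa [Nat.add_sub_cancel' hi'] at h1
    rw [poch_neg_nat n i hi', hsplit]
    have h1 : poch (-(n : ℝ) - a - b) i ≠ 0 := hne i hi'
    have h2 : (i.factorial : ℝ) ≠ 0 := Nat.cast_ne_zero.mpr i.factorial_ne_zero
    have h3 : poch ((-(n : ℝ) - a - b) + i) (n - i) ≠ 0 := by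
      have hs := poch_neg_sign ((-(n : ℝ) - a - b) + i) (n - i) (fun j hj => by
        have hij : (i : ℝ) + (j : ℝ) + 1 ≤ (n : ℝ) := by
          exact_mod_cast (by omega : i + j + 1 ≤ n)
        linarith)
      intro h0
      rw [h0, mul_zero] at hs
      exact lt_irrefl _ hs
    field_simp
  rw [Finset.sum_congr rfl term_eq, ← Finset.sum_div, vdm n c (-(n : ℝ) - a - b)]
  have e1 : -(n : ℝ) - a - b - c = -(n : ℝ) - (a + b + c) := by ring
  have e2 : poch (-(n : ℝ) - a - b) n = poch (-(n : ℝ) - (a + b)) n := by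
    rw [show -(n : ℝ) - a - b = -(n : ℝ) - (a + b) from by ring]
  rw [e1, poch_reflect (a + b + c) n, e2, poch_reflect (a + b) n]
  have e3 : (1 : ℝ) + (a + b + c) = 1 + a + b + c := by ring
  have e4 : (1 : ℝ) + (a + b) = 1 + a + b := by ring
  rw [e3, e4, mul_div_mul_left _ _ (pow_ne_zero n (by norm_num : (-1 : ℝ) ≠ 0))]

lemma G_eq (n i : ℕ) (t b : ℝ) :
    poch (-(n : ℝ) - t) i / poch (-(n : ℝ) - b - t) i
      = ∏ j ∈ Finset.range i, (((n : ℝ) + t - j) / ((n : ℝ) + b + t - j)) := by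
  rw [poch_eq_neg_prod (-(n : ℝ) - t) i, poch_eq_neg_prod (-(n : ℝ) - b - t) i,
    mul_div_mul_left _ _ (pow_ne_zero i (by norm_num : (-1 : ℝ) ≠ 0)),
    ← Finset.prod_div_distrib]
  refine Finset.prod_congr rfl fun j _ => ?_
  ring_nf

lemma G_mono (n i : ℕ) (hi : i ≤ n) (b t₁ t₂ : ℝ) (hb0 : -1 < b) (hb1 : b < 0)
    (ht1 : 0 ≤ t₁) (ht : t₁ ≤ t₂) :
    poch (-(n : ℝ) - t₂) i / poch (-(n : ℝ) - b - t₂) i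
      ≤ poch (-(n : ℝ) - t₁) i / poch (-(n : ℝ) - b - t₁) i := by
  rw [G_eq, G_eq]
  apply Finset.prod_le_prod
  · intro j hj
    have hjn : j + 1 ≤ n := by
      have := Finset.mem_range.mp hj; omega
    have hj' : (j : ℝ) + 1 ≤ (n : ℝ) := by exact_mod_cast hjn
    apply div_nonneg <;> linarith
  · intro j hj
    have hjn : j + 1 ≤ n := by
      have := Finset.mem_range.mp hj; omega
    have hj' : (j : ℝ) + 1 ≤ (n : ℝ) := by exact_mod_cast hjn
    have d1 : 0 < (n : ℝ) + b + t₁ - j := by linarith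
    have d2 : 0 < (n : ℝ) + b + t₂ - j := by linarith
    rw [div_le_div_iff₀ d2 d1]
    nlinarith [mul_nonneg (sub_nonneg.mpr ht) (neg_nonneg.mpr hb1.le)]

lemma sign_ne (y : ℝ) (m : ℕ) (h : 0 < (-1) ^ m * y) : y ≠ 0 := by
  intro h0; rw [h0, mul_zero] at h; exact lt_irrefl _ h

lemma term_ineq (a b c : ℝ) (ha0 : 0 < a) (ha1 : a < 1) (hb0 : -1 < b) (hb1 : b < 0)
    (hc0 : -1 < c) (hc1 : c ≤ 0) (n i : ℕ) (hi' : i ≤ n) :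
    poch (-(n : ℝ)) i ^ 2 * poch c i /
        ((i.factorial : ℝ) * poch (-(n : ℝ) - a) i * poch (-(n : ℝ) - b) i)
      ≤ poch (-(n : ℝ)) i * poch c i / ((i.factorial : ℝ) * poch (-(n : ℝ) - a - b) i)
    ∧ poch (-(n : ℝ)) i * poch c i / ((i.factorial : ℝ) * poch (-(n : ℝ) - a - b) i)
      ≤ poch (-(n : ℝ)) i * poch (-(n : ℝ) - 1) i * poch c i /
          ((i.factorial : ℝ) * poch (-(n : ℝ) - a) i * poch (-(n : ℝ) - b - 1) i) := by
  rcases Nat.eq_zero_or_pos i with h0 | h0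
  · subst h0; constructor <;> simp [poch]
  set P0 := poch (-(n : ℝ)) i with hP0
  set Pa := poch (-(n : ℝ) - a) i with hPadef
  set Pb := poch (-(n : ℝ) - b) i with hPbdef
  set Pab := poch (-(n : ℝ) - a - b) i with hPabdef
  set P1 := poch (-(n : ℝ) - 1) i with hP1def
  set Pb1 := poch (-(n : ℝ) - b - 1) i with hPb1def
  set Pc := poch c i with hPcdef
  set fi := (i.factorial : ℝ) with hfidef
  have hjn : ∀ j : ℕ, j < i → (j : ℝ) + 1 ≤ (n : ℝ) := by
    intro j hj
    exact_mod_cast (by omega : j + 1 ≤ n)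
  have s0 : 0 < (-1) ^ i * P0 :=
    poch_neg_sign _ i (fun j hj => by have := hjn j hj; linarith)
  have sa : 0 < (-1) ^ i * Pa :=
    poch_neg_sign _ i (fun j hj => by have := hjn j hj; linarith)
  have sb : 0 < (-1) ^ i * Pb :=
    poch_neg_sign _ i (fun j hj => by have := hjn j hj; linarith)
  have sab : 0 < (-1) ^ i * Pab :=
    poch_neg_sign _ i (fun j hj => by have := hjn j hj; linarith)
  have sb1 : 0 < (-1) ^ i * Pb1 :=
    poch_neg_sign _ i (fun j hj => by have := hjn j hj; linarith)
  have hPa : Pa ≠ 0 := sign_ne _ i sa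
  have hPb : Pb ≠ 0 := sign_ne _ i sb
  have hPab : Pab ≠ 0 := sign_ne _ i sab
  have hPb1 : Pb1 ≠ 0 := sign_ne _ i sb1
  have hfipos : 0 < fi := by
    rw [hfidef]; exact_mod_cast i.factorial_pos
  have hfi : fi ≠ 0 := ne_of_gt hfipos
  have hc : Pc ≤ 0 := poch_c_nonpos c hc0 hc1 i h0
  have hm1 : ((-1 : ℝ)) ^ i ≠ 0 := pow_ne_zero i (by norm_num)
  have hfrac : 0 < P0 / Pa := by
    rw [show P0 / Pa = ((-1) ^ i * P0) / ((-1) ^ i * Pa) from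
      (mul_div_mul_left P0 Pa hm1).symm]
    exact div_pos s0 sa
  have hA : P0 * Pc / (fi * Pa) ≤ 0 := by
    have e : P0 * Pc / (fi * Pa) = (P0 / Pa) * (Pc / fi) := by ring
    rw [e]
    have h2 : Pc / fi ≤ 0 := div_nonpos_of_nonpos_of_nonneg hc hfipos.le
    nlinarith
  have hG1 : Pa / Pab ≤ P0 / Pb := by
    have h := G_mono n i hi' b 0 a hb0 hb1 le_rfl ha0.le
    rw [show -(n : ℝ) - b - a = -(n : ℝ) - a - b from by ring] at h
    simpa using h
  have hG2 : P1 / Pb1 ≤ Pa / Pab := by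
    have h := G_mono n i hi' b a 1 hb0 hb1 ha0.le ha1.le
    rw [show -(n : ℝ) - b - a = -(n : ℝ) - a - b from by ring] at h
    exact h
  have e_mid : P0 * Pc / (fi * Pab) = (P0 * Pc / (fi * Pa)) * (Pa / Pab) := by
    field_simp
  constructor
  · have key := mul_le_mul_of_nonpos_left hG1 hA
    have e_l : P0 ^ 2 * Pc / (fi * Pa * Pb) = (P0 * Pc / (fi * Pa)) * (P0 / Pb) := by ring
    rw [e_l, e_mid]
    exact key
  · have key := mul_le_mul_of_nonpos_left hG2 hA
    have e_r : P0 * P1 * Pc / (fi * Pa * Pb1) = (P0 * Pc / (fi * Pa)) * (P1 / Pb1) := by ring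
    rw [e_mid, e_r]
    exact key

/-- For 0 < a < 1, −1 < b < 0, −1 < c ≤ 0 and every n ∈ ℕ,
₃F₂(−n,−n,c;−n−a,−n−b;1) ≤ (1+a+b+c)_n/(1+a+b)_n ≤ ₃F₂(−n,−n−1,c;−n−a,−n−b−1;1). -/
theorem statement4 (a b c : ℝ) (ha0 : 0 < a) (ha1 : a < 1) (hb0 : -1 < b) (hb1 : b < 0)
    (hc0 : -1 < c) (hc1 : c ≤ 0) (n : ℕ) :
    (∑ i ∈ Finset.range (n + 1),
        (poch (-(n:ℝ)) i) ^ 2 * poch c i /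
          ((i.factorial : ℝ) * poch (-(n:ℝ) - a) i * poch (-(n:ℝ) - b) i))
      ≤ poch (1 + a + b + c) n / poch (1 + a + b) n
    ∧ poch (1 + a + b + c) n / poch (1 + a + b) n
      ≤ ∑ i ∈ Finset.range (n + 1),
          poch (-(n:ℝ)) i * poch (-(n:ℝ) - 1) i * poch c i /
            ((i.factorial : ℝ) * poch (-(n:ℝ) - a) i * poch (-(n:ℝ) - b - 1) i) := by

  have hab : -1 < a + b := by linarith
  have key := mid_eq a b c hab n
  constructor
  · rw [key]
    apply Finset.sum_le_sum
    intro i hi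
    have hi' : i ≤ n := by have := Finset.mem_range.mp hi; omega
    exact (term_ineq a b c ha0 ha1 hb0 hb1 hc0 hc1 n i hi').1
  · rw [key]
    apply Finset.sum_le_sum
    intro i hi
    have hi' : i ≤ n := by have := Finset.mem_range.mp hi; omega
    exact (term_ineq a b c ha0 ha1 hb0 hb1 hc0 hc1 n i hi').2
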